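/- Two-term reciprocally convex combination inequality (matrix form): Let n be a positive integer, R a symmetric positive definite n×n real matrix, and G an n×n real matrix such that the 2n×2n block matrix [[R, G], [Gᵀ, R]] is positive semidefinite. Then for every α with 0 < α < 1 and all vectors u, v ∈ ℝⁿ: (1/α) · uᵀ R u + (1/(1−α)) · vᵀ R v ≥ uᵀ R u + vᵀ R v + uᵀ G v + vᵀ Gᵀ u. -/

import Mathlib

open Matrix

/-- Two-term reciprocally convex combination inequality (matrix form). -/
theorem reciprocally_convex_combination_matrix
    (n : ℕ) (hn : 0 < n)
    (R G : Matrix (Fin n) (Fin n) ℝ)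
    (hRsymm : R.IsSymm) (hRpd : R.PosDef)
    (hblock : (Matrix.fromBlocks R G Gᵀ R).PosSemidef)
    (α : ℝ) (hα0 : 0 < α) (hα1 : α < 1) (u v : Fin n → ℝ) :
    (1 / α) * (u ⬝ᵥ (R *ᵥ u)) + (1 / (1 - α)) * (v ⬝ᵥ (R *ᵥ v)) ≥
      u ⬝ᵥ (R *ᵥ u) + v ⬝ᵥ (R *ᵥ v) + u ⬝ᵥ (G *ᵥ v) + v ⬝ᵥ (Gᵀ *ᵥ u) := by
  have h1α : 0 < 1 - α := by linarith
  set c : ℝ := Real.sqrt ((1 - α) / α) with hc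
  set d : ℝ := Real.sqrt (α / (1 - α)) with hd
  have hc2 : c ^ 2 = (1 - α) / α := Real.sq_sqrt (by positivity)
  have hd2 : d ^ 2 = α / (1 - α) := Real.sq_sqrt (by positivity)
  have hcd : c * d = 1 := by
    rw [hc, hd, ← Real.sqrt_mul (by positivity)]
    rw [div_mul_div_comm, mul_comm, div_self (by positivity), Real.sqrt_one]
  have key := hblock.dotProduct_mulVec_nonneg (Sum.elim (c • u) (-(d • v)))
  rw [Matrix.fromBlocks_mulVec] at key
  simp only [star_trivial, sumElim_dotProduct_sumElim, Matrix.mulVec_smul,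
    Matrix.mulVec_neg, dotProduct_add, smul_dotProduct, dotProduct_smul,
    neg_dotProduct, dotProduct_neg, smul_eq_mul, Sum.elim_comp_inl, Sum.elim_comp_inr] at key
  have hcc : c * c = (1 - α) / α := by nlinarith [hc2]
  have hdd : d * d = α / (1 - α) := by nlinarith [hd2]
  have key2 : 0 ≤ (1 - α) / α * (u ⬝ᵥ R *ᵥ u) + α / (1 - α) * (v ⬝ᵥ R *ᵥ v)
      - (u ⬝ᵥ G *ᵥ v + v ⬝ᵥ Gᵀ *ᵥ u) := by
    rw [show c * (c * (u ⬝ᵥ R *ᵥ u)) + -(d * (c * (u ⬝ᵥ G *ᵥ v)))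
        + (c * -(d * (v ⬝ᵥ Gᵀ *ᵥ u)) + -(d * -(d * (v ⬝ᵥ R *ᵥ v))))
        = (c * c) * (u ⬝ᵥ R *ᵥ u) + (d * d) * (v ⬝ᵥ R *ᵥ v)
          - (c * d) * (u ⬝ᵥ G *ᵥ v + v ⬝ᵥ Gᵀ *ᵥ u) from by ring, hcc, hdd, hcd] at key
    linarith
  have e1 : (1:ℝ) / α = 1 + (1 - α) / α := by field_simp; ring
  have e2 : (1:ℝ) / (1 - α) = 1 + α / (1 - α) := by field_simp; ring
  rw [ge_iff_le, e1, e2]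
  nlinarith [key2]
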